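/- (Maclaurin inequality on the Gårding cone.) Let n ≥ 1, 1 ≤ k ≤ n, and λ ∈ Γ_k^+ ⊂ ℝ^n. Then (σ_k(λ) / C(n,k))^{1/k} ≤ σ_1(λ)/n, where C(n,k) is the binomial coefficient. -/

import Mathlib

/-- The `k`-th elementary symmetric function of `lam = (λ_1, …, λ_n) ∈ ℝ^n`. -/
noncomputable def esymm (n k : ℕ) (lam : Fin n → ℝ) : ℝ :=
  ∑ s ∈ Finset.univ.powersetCard k, ∏ i ∈ s, lam i

lemma esymm_eq_multiset (n k : ℕ) (f : Fin n → ℝ) :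
    esymm n k f = ((List.ofFn f : Multiset ℝ)).esymm k := by
  rw [← Fin.univ_val_map, Finset.esymm_map_val]; rfl

lemma esymm_list (l : List ℝ) (k : ℕ) :
    esymm l.length k l.get = (l : Multiset ℝ).esymm k := by
  rw [esymm_eq_multiset, List.ofFn_get]

lemma esymm_zero (n : ℕ) (f : Fin n → ℝ) : esymm n 0 f = 1 := by
  simp [esymm]

-- sum over complements
lemma sum_compl_powersetCard {n : ℕ} (r : ℕ) (hr : r ≤ n) (F : Finset (Fin n) → ℝ) :
    ∑ s ∈ Finset.univ.powersetCard r, F sᶜ = ∑ s ∈ Finset.univ.powersetCard (n - r), F s := by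
  refine Finset.sum_nbij' (fun s => sᶜ) (fun s => sᶜ) ?_ ?_ ?_ ?_ ?_
  · intro s hs
    rw [Finset.mem_powersetCard_univ] at hs ⊢
    rw [Finset.card_compl, hs, Fintype.card_fin]
  · intro s hs
    rw [Finset.mem_powersetCard_univ] at hs ⊢
    rw [Finset.card_compl, hs, Fintype.card_fin]
    omega
  · intro s _; simp
  · intro s _; simp
  · intro s _; rfl

lemma esymm_top' (n : ℕ) (f : Fin n → ℝ) : esymm n n f = ∏ i, f i := by
  unfold esymm
  have : Finset.powersetCard n (Finset.univ : Finset (Fin n)) = {Finset.univ} := by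
    have := Finset.powersetCard_self (Finset.univ : Finset (Fin n))
    rwa [Finset.card_univ, Fintype.card_fin] at this
  rw [this, Finset.sum_singleton]

lemma sum_offDiag_pair {n : ℕ} (F : Finset (Fin n) → ℝ) :
    ∑ p ∈ Finset.univ.offDiag, F {p.1, p.2}
      = 2 * ∑ s ∈ Finset.univ.powersetCard 2, F s := by
  rw [← Finset.sum_fiberwise_of_maps_to
    (g := fun p : Fin n × Fin n => ({p.1, p.2} : Finset (Fin n)))
    (t := Finset.univ.powersetCard 2) ?_ (fun p => F {p.1, p.2})]
  · rw [Finset.mul_sum]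
    refine Finset.sum_congr rfl ?_
    intro s hs
    obtain ⟨a, b, hab, rfl⟩ := Finset.card_eq_two.1 (Finset.mem_powersetCard_univ.1 hs)
    have hfib : (Finset.univ.offDiag.filter
        fun p : Fin n × Fin n => ({p.1, p.2} : Finset (Fin n)) = {a, b})
        = {(a, b), (b, a)} := by
      ext p
      simp only [Finset.mem_filter, Finset.mem_offDiag, Finset.mem_univ, true_and,
        Finset.mem_insert, Finset.mem_singleton, Prod.ext_iff]
      constructor
      · rintro ⟨hne, heq⟩
        have h1 : p.1 ∈ ({a, b} : Finset (Fin n)) := by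
          rw [← heq]; exact Finset.mem_insert_self _ _
        have h2 : p.2 ∈ ({a, b} : Finset (Fin n)) := by
          rw [← heq]; exact Finset.mem_insert_of_mem (Finset.mem_singleton_self _)
        have h3 : a ∈ ({p.1, p.2} : Finset (Fin n)) := by
          rw [heq]; exact Finset.mem_insert_self _ _
        simp only [Finset.mem_insert, Finset.mem_singleton] at h1 h2 h3
        rcases h1 with h1 | h1 <;> rcases h2 with h2 | h2 <;>
          first
          | (exact absurd (h1.trans h2.symm) hne)
          | tauto
      · rintro (⟨h1, h2⟩ | ⟨h1, h2⟩)
        · constructor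
          · rw [h1, h2]; exact hab
          · rw [h1, h2]
        · constructor
          · rw [h1, h2]; exact hab.symm
          · rw [h1, h2]; exact Finset.pair_comm b a
    rw [hfib, Finset.sum_pair (by simp [Prod.ext_iff, hab])]
    rw [Finset.pair_comm b a]; ring
  · intro p hp
    rw [Finset.mem_powersetCard_univ]
    exact Finset.card_pair (Finset.mem_offDiag.1 hp).2.2

lemma newton_top (m : ℕ) (hm : 2 ≤ m) (f : Fin m → ℝ) :
    (m.choose (m-1) : ℝ)^2 * (esymm m (m-2) f * esymm m m f)
      ≤ (m.choose (m-2) : ℝ) * (m.choose m : ℝ) * (esymm m (m-1) f)^2 := by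
  set g : Fin m → ℝ := fun i => ∏ j ∈ ({i} : Finset (Fin m))ᶜ, f j with hg
  set P : ℝ := ∏ i, f i with hP
  set W : ℝ := ∑ s ∈ Finset.univ.powersetCard 2, ∏ j ∈ sᶜ, f j with hW
  have h1 : esymm m (m-1) f = ∑ i, g i := by
    unfold esymm
    rw [← sum_compl_powersetCard 1 (by omega) (fun s => ∏ i ∈ s, f i),
      Finset.powersetCard_one, Finset.sum_map]
    rfl
  have h2 : esymm m (m-2) f = W := by
    unfold esymm
    rw [← sum_compl_powersetCard 2 hm (fun s => ∏ i ∈ s, f i)]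
  have h3 : esymm m m f = P := esymm_top' m f
  have h4 : (∑ i, g i)^2 = ∑ i, (g i)^2 + ∑ p ∈ Finset.univ.offDiag, g p.1 * g p.2 := by
    rw [sq, Finset.sum_mul_sum, ← Finset.sum_product', ← Finset.diag_union_offDiag,
      Finset.sum_union (Finset.disjoint_diag_offDiag _), Finset.sum_diag]
    simp [sq]
  have h5 : ∀ p ∈ (Finset.univ : Finset (Fin m)).offDiag,
      g p.1 * g p.2 = P * ∏ j ∈ (({p.1, p.2} : Finset (Fin m)))ᶜ, f j := by
    rintro ⟨i, j⟩ hp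
    have hij : i ≠ j := (Finset.mem_offDiag.1 hp).2.2
    set h : ℝ := ∏ x ∈ (({i, j} : Finset (Fin m)))ᶜ, f x with hh
    have hci : ({i} : Finset (Fin m))ᶜ = insert j ({i, j} : Finset (Fin m))ᶜ := by
      ext x
      simp only [Finset.mem_compl, Finset.mem_singleton, Finset.mem_insert]
      by_cases hx : x = j <;> simp [hx, hij] <;> tauto
    have hcj : ({j} : Finset (Fin m))ᶜ = insert i ({i, j} : Finset (Fin m))ᶜ := by
      ext x
      simp only [Finset.mem_compl, Finset.mem_singleton, Finset.mem_insert]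
      by_cases hx : x = i <;> simp [hx, hij.symm] <;> tauto
    have hjn : j ∉ (({i, j} : Finset (Fin m)))ᶜ := by simp
    have hin : i ∉ (({i, j} : Finset (Fin m)))ᶜ := by simp
    have hgi : g i = f j * h := by rw [hg]; simp only; rw [hci, Finset.prod_insert hjn]
    have hgj : g j = f i * h := by rw [hg]; simp only; rw [hcj, Finset.prod_insert hin]
    have hPP : P = f i * f j * h := by
      rw [hP, ← Finset.prod_mul_prod_compl ({i, j} : Finset (Fin m)) f,
        Finset.prod_pair hij]
    simp only
    rw [hgi, hgj, hPP]; ring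
  have h6 : ∑ p ∈ Finset.univ.offDiag, g p.1 * g p.2 = P * (2 * W) := by
    rw [Finset.sum_congr rfl h5, ← Finset.mul_sum,
      sum_offDiag_pair (fun s => ∏ j ∈ sᶜ, f j)]
  have hCS : (∑ i, g i)^2 ≤ (m : ℝ) * ∑ i, (g i)^2 := by
    have := sq_sum_le_card_mul_sum_sq (s := (Finset.univ : Finset (Fin m))) (f := g)
    simpa using this
  have hc1 : m.choose (m-1) = m := by
    rw [Nat.choose_symm (by omega : 1 ≤ m), Nat.choose_one_right]
  have hc2 : 2 * (m.choose (m-2)) = m * (m - 1) := by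
    have h' : m.choose (m-2) = m.choose 2 := Nat.choose_symm (by omega : 2 ≤ m)
    have he : 2 ∣ m * (m - 1) := by
      obtain ⟨c, hc⟩ := Nat.even_mul_succ_self (m-1)
      rw [show m - 1 + 1 = m by omega] at hc
      exact ⟨c, by rw [mul_comm, hc]; omega⟩
    rw [h', Nat.choose_two_right, Nat.mul_div_cancel' he]
  have hc3 : m.choose m = 1 := Nat.choose_self m
  have hc2' : 2 * (m.choose (m-2) : ℝ) = m * ((m:ℝ) - 1) := by
    have := congrArg (Nat.cast : ℕ → ℝ) hc2
    push_cast [Nat.cast_sub (by omega : 1 ≤ m)] at this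
    linarith
  have hmR : (2:ℝ) ≤ m := by exact_mod_cast hm
  rw [h1, h2, h3, hc1, hc3]
  set S : ℝ := ∑ i, g i
  set Q : ℝ := ∑ i, (g i)^2
  have hS : S^2 = Q + P * (2 * W) := by rw [h4, h6]
  have hS2 : (m:ℝ)^2 * S^2 = (m:ℝ)^2*Q + (m:ℝ)^2*(P*(2*W)) := by
    linear_combination ((m:ℝ)^2) * hS
  have hpos : (0:ℝ) ≤ (m:ℝ) * ((m:ℝ)*Q - S^2) := by
    have : (0:ℝ) ≤ (m:ℝ) := by linarith
    nlinarith [hCS]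
  have hc2'' : 2*((m.choose (m-2):ℝ) * S^2) = (m:ℝ)^2*S^2 - (m:ℝ)*S^2 := by
    linear_combination S^2 * hc2'
  push_cast
  nlinarith [hS2, hpos, hc2'']

open Polynomial in
theorem newton : ∀ (m : ℕ) (f : Fin m → ℝ) (j : ℕ), 1 ≤ j → j + 1 ≤ m →
    (m.choose j : ℝ)^2 * (esymm m (j-1) f * esymm m (j+1) f)
      ≤ (m.choose (j-1) : ℝ) * (m.choose (j+1) : ℝ) * (esymm m j f)^2 := by
  intro m
  induction m using Nat.strong_induction_on with
  | _ m IH =>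
  intro f j hj hjm
  rcases eq_or_lt_of_le hjm with he | hlt
  · -- top case : j + 1 = m
    subst he
    have := newton_top (j+1) (by omega) f
    simpa [Nat.add_sub_cancel, show j+1-2 = j-1 by omega] using this
  · -- middle case : j + 1 < m
    have hm3 : 3 ≤ m := by omega
    set s : Multiset ℝ := ((List.ofFn f : List ℝ) : Multiset ℝ) with hsdef
    have hscard : Multiset.card s = m := by simp [hsdef]
    set t : Multiset ℝ := s.map Neg.neg with htdef
    have htcard : Multiset.card t = m := by rw [htdef, Multiset.card_map, hscard]
    set p : Polynomial ℝ := (t.map fun a => X - C a).prod with hpdef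
    have hmonic : p.Monic :=
      monic_multiset_prod_of_monic _ _ fun a _ => monic_X_sub_C a
    have hdeg : p.natDegree = m := by
      rw [hpdef, natDegree_multiset_prod_X_sub_C_eq_card, htcard]
    have hroots : p.roots = t := roots_multiset_prod_X_sub_C t
    have hsf : ∀ i : ℕ, s.esymm i = esymm m i f := by
      intro i; rw [esymm_eq_multiset]
    have hcoeff : ∀ i : ℕ, i ≤ m → p.coeff (m - i) = esymm m i f := by
      intro i hi
      rw [hpdef, Multiset.prod_X_sub_C_coeff t (by omega : m - i ≤ Multiset.card t)]
      rw [htcard, show m - (m - i) = i by omega, htdef, Multiset.esymm_neg,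
        ← mul_assoc, ← pow_add, Even.neg_one_pow ⟨i, by ring⟩, one_mul, hsf]
    set q : Polynomial ℝ := derivative p with hqdef
    have hqdeg_le : q.natDegree ≤ m - 1 := by
      have := natDegree_derivative_le p
      rwa [hdeg] at this
    have hqroots_ge : m - 1 ≤ Multiset.card q.roots := by
      have := card_roots_le_derivative p
      rw [← hqdef, hroots, htcard] at this
      omega
    have hqcard_le := card_roots' q
    have hqcard : Multiset.card q.roots = m - 1 := by omega
    have hqdeg : q.natDegree = m - 1 := by omega
    have hlead : q.leadingCoeff = (m : ℝ) := by
      rw [Polynomial.leadingCoeff, hqdeg, hqdef, coeff_derivative,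
        show m - 1 + 1 = m by omega, ← hdeg, hmonic.coeff_natDegree, hdeg]
      push_cast [show (1:ℕ) ≤ m by omega]
      ring
    set u : Multiset ℝ := q.roots.map Neg.neg with hudef
    have hucard : Multiset.card u = m - 1 := by rw [hudef, Multiset.card_map, hqcard]
    have hqru : q.roots = u.map Neg.neg := by
      rw [hudef, Multiset.map_map]
      simp
    have key : ∀ i : ℕ, i ≤ m - 1 → (m:ℝ) * u.esymm i = ((m - i : ℕ) : ℝ) * esymm m i f := by
      intro i hi
      have h1 : q.coeff (m-1-i)
          = q.leadingCoeff * (-1)^(q.natDegree - (m-1-i)) * q.roots.esymm (q.natDegree - (m-1-i)) :=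
        coeff_eq_esymm_roots_of_card (hqcard.trans hqdeg.symm) (by omega)
      rw [hqdeg, show m - 1 - (m-1-i) = i by omega, hlead, hqru, Multiset.esymm_neg] at h1
      have hne : ((-1:ℝ))^i * ((-1:ℝ))^i = 1 := by
        rw [← pow_add]; exact Even.neg_one_pow ⟨i, by ring⟩
      have h1' : q.coeff (m-1-i) = (m:ℝ) * u.esymm i := by
        rw [h1]; linear_combination ((m:ℝ) * u.esymm i) * hne
      have h2 : q.coeff (m-1-i) = esymm m i f * ((m - i : ℕ) : ℝ) := by
        rw [hqdef, coeff_derivative, show m - 1 - i + 1 = m - i by omega,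
          hcoeff i (by omega)]
        congr 1
        have hx : (m - 1 - i) + 1 = m - i := by omega
        exact_mod_cast congrArg (Nat.cast : ℕ → ℝ) hx
      rw [h1'] at h2
      linarith [h2]
    have chid : ∀ i : ℕ, i ≤ m - 1 →
        ((m - i : ℕ) : ℝ) * (m.choose i : ℝ) = (m : ℝ) * ((m-1).choose i : ℝ) := by
      intro i hi
      have hnat : (m - i) * m.choose i = m * (m-1).choose i := by
        have h1 : m * (m-1).choose i = m * (m-1).choose (m-1-i) := by
          rw [Nat.choose_symm (by omega : i ≤ m - 1)]
        have h2 := Nat.add_one_mul_choose_eq (m-1) (m-1-i)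
        rw [show m - 1 + 1 = m by omega, show m-1-i+1 = m - i by omega] at h2
        rw [h1, h2, Nat.choose_symm (by omega : i ≤ m)]
        ring
      exact_mod_cast congrArg (Nat.cast : ℕ → ℝ) hnat
    -- convert u to a tuple
    set l : List ℝ := u.toList with hldef
    have hlen : l.length = m - 1 := by rw [hldef, Multiset.length_toList, hucard]
    have hesy : ∀ i : ℕ, esymm l.length i l.get = u.esymm i := by
      intro i; rw [esymm_list, hldef, Multiset.coe_toList]
    have NI := IH l.length (by omega) l.get j hj (by omega)
    rw [hesy, hesy, hesy, hlen] at NI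
    -- final arithmetic
    set a0 : ℝ := esymm m (j-1) f
    set a1 : ℝ := esymm m j f
    set a2 : ℝ := esymm m (j+1) f
    set v0 : ℝ := u.esymm (j-1)
    set v1 : ℝ := u.esymm j
    set v2 : ℝ := u.esymm (j+1)
    set A0 : ℝ := (m.choose (j-1) : ℝ)
    set A1 : ℝ := (m.choose j : ℝ)
    set A2 : ℝ := (m.choose (j+1) : ℝ)
    set B0 : ℝ := ((m-1).choose (j-1) : ℝ)
    set B1 : ℝ := ((m-1).choose j : ℝ)
    set B2 : ℝ := ((m-1).choose (j+1) : ℝ)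
    set w0 : ℝ := ((m - (j-1) : ℕ) : ℝ) with hw0def
    set w1 : ℝ := ((m - j : ℕ) : ℝ) with hw1def
    set w2 : ℝ := ((m - (j+1) : ℕ) : ℝ) with hw2def
    have k0 : (m:ℝ) * v0 = w0 * a0 := key (j-1) (by omega)
    have k1 : (m:ℝ) * v1 = w1 * a1 := key j (by omega)
    have k2 : (m:ℝ) * v2 = w2 * a2 := key (j+1) (by omega)
    have c0 : w0 * A0 = (m:ℝ) * B0 := chid (j-1) (by omega)
    have c1 : w1 * A1 = (m:ℝ) * B1 := chid j (by omega)
    have c2 : w2 * A2 = (m:ℝ) * B2 := chid (j+1) (by omega)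
    have hw0 : (0:ℝ) < w0 := by
      rw [hw0def]; exact_mod_cast (by omega : 0 < m - (j-1))
    have hw1 : (0:ℝ) < w1 := by
      rw [hw1def]; exact_mod_cast (by omega : 0 < m - j)
    have hw2 : (0:ℝ) < w2 := by
      rw [hw2def]; exact_mod_cast (by omega : 0 < m - (j+1))
    have H := mul_le_mul_of_nonneg_left NI (by positivity : (0:ℝ) ≤ (m:ℝ)^4)
    have e1 : (m:ℝ)^4 * (B1^2 * (v0 * v2)) = (w1^2 * w0 * w2) * (A1^2 * (a0 * a2)) := by
      have : (m:ℝ)^4 * (B1^2 * (v0 * v2))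
          = ((m:ℝ)*B1)^2 * (((m:ℝ)*v0) * ((m:ℝ)*v2)) := by ring
      rw [this, ← c1, k0, k2]
      ring
    have e2 : (m:ℝ)^4 * (B0 * B2 * v1^2) = (w1^2 * w0 * w2) * (A0 * A2 * a1^2) := by
      have : (m:ℝ)^4 * (B0 * B2 * v1^2)
          = ((m:ℝ)*B0) * ((m:ℝ)*B2) * ((m:ℝ)*v1)^2 := by ring
      rw [this, ← c0, ← c2, k1]
      ring
    rw [e1, e2] at H
    have hwpos : (0:ℝ) < w1^2 * w0 * w2 := by positivity
    exact (mul_le_mul_iff_right₀ hwpos).mp H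

/-- The Gårding cone `Γ_k^+ = {λ ∈ ℝ^n : σ_j(λ) > 0 for j = 1, …, k}`. -/
def GammaPlus (n k : ℕ) : Set (Fin n → ℝ) :=
  {lam | ∀ j : ℕ, 1 ≤ j → j ≤ k → 0 < esymm n j lam}

/-- Maclaurin inequality on the Gårding cone:
`(σ_k(λ)/C(n,k))^{1/k} ≤ σ_1(λ)/n` for `λ ∈ Γ_k^+`. -/
theorem maclaurin_inequality (n k : ℕ) (hn : 1 ≤ n) (hk1 : 1 ≤ k) (hk2 : k ≤ n)
    (lam : Fin n → ℝ) (hlam : lam ∈ GammaPlus n k) :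
    (esymm n k lam / (n.choose k : ℝ)) ^ ((1 : ℝ) / (k : ℝ)) ≤ esymm n 1 lam / (n : ℝ) := by
  set P : ℕ → ℝ := fun j => esymm n j lam / (n.choose j : ℝ) with hPdef
  have hP0 : P 0 = 1 := by
    simp [hPdef, esymm_zero]
  have hPpos : ∀ j, 1 ≤ j → j ≤ k → 0 < P j := by
    intro j h1 h2
    exact div_pos (hlam j h1 h2) (by exact_mod_cast Nat.choose_pos (le_trans h2 hk2))
  have hPnn : ∀ j, j ≤ k → 0 ≤ P j := by
    intro j hjk
    rcases Nat.eq_zero_or_pos j with rfl | hj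
    · rw [hP0]; norm_num
    · exact le_of_lt (hPpos j hj hjk)
  have newton' : ∀ j, 1 ≤ j → j + 1 ≤ n → P (j-1) * P (j+1) ≤ P j ^ 2 := by
    intro j h1 h2
    have NI := newton n lam j h1 h2
    have hA0 : (0:ℝ) < (n.choose (j-1) : ℝ) := by
      exact_mod_cast Nat.choose_pos (by omega)
    have hA1 : (0:ℝ) < (n.choose j : ℝ) := by
      exact_mod_cast Nat.choose_pos (by omega)
    have hA2 : (0:ℝ) < (n.choose (j+1) : ℝ) := by
      exact_mod_cast Nat.choose_pos (by omega)
    rw [hPdef]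
    simp only
    rw [div_mul_div_comm, div_pow, div_le_div_iff₀ (by positivity) (by positivity)]
    nlinarith [NI]
  have D : ∀ j, 1 ≤ j → j ≤ k → P j ^ (j-1) ≤ P (j-1) ^ j := by
    intro j
    induction j with
    | zero => omega
    | succ i ih =>
      intro _ hjk
      rcases Nat.eq_zero_or_pos i with rfl | hi
      · simp [hP0]
      · simp only [Nat.add_sub_cancel]
        have hNi : P (i-1) * P (i+1) ≤ P i ^ 2 := newton' i hi (by omega)
        have hDi : P i ^ (i-1) ≤ P (i-1) ^ i := ih hi (by omega)
        have hPi : 0 < P i := hPpos i hi (by omega)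
        have hPi1 : 0 < P (i+1) := hPpos (i+1) (by omega) hjk
        have hPim : 0 ≤ P (i-1) := hPnn (i-1) (by omega)
        have step1 : P (i+1) ^ i * P i ^ (i-1) ≤ P (i+1) ^ i * P (i-1) ^ i :=
          mul_le_mul_of_nonneg_left hDi (pow_nonneg (le_of_lt hPi1) i)
        have step2 : P (i+1) ^ i * P (i-1) ^ i ≤ (P i ^ 2) ^ i := by
          rw [← mul_pow]
          exact pow_le_pow_left₀ (mul_nonneg (le_of_lt hPi1) hPim)
            (by nlinarith [hNi]) i
        have step3 : (P i ^ 2) ^ i = P i ^ (i+1) * P i ^ (i-1) := by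
          rw [← pow_mul, ← pow_add]
          congr 1
          omega
        have hfin : P (i+1) ^ i * P i ^ (i-1) ≤ P i ^ (i+1) * P i ^ (i-1) := by
          calc P (i+1) ^ i * P i ^ (i-1) ≤ P (i+1) ^ i * P (i-1) ^ i := step1
            _ ≤ (P i ^ 2) ^ i := step2
            _ = P i ^ (i+1) * P i ^ (i-1) := step3
        exact le_of_mul_le_mul_right hfin (by positivity)
  have G : ∀ j, 1 ≤ j → j ≤ k → P j ≤ P 1 ^ j := by
    intro j
    induction j with
    | zero => omega
    | succ i ih =>
      intro _ hjk
      rcases Nat.eq_zero_or_pos i with rfl | hi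
      · simp
      · have hGi : P i ≤ P 1 ^ i := ih hi (by omega)
        have hDi1 : P (i+1) ^ i ≤ P i ^ (i+1) := by
          have := D (i+1) (by omega) hjk
          simpa using this
        have h1 : P i ^ (i+1) ≤ (P 1 ^ i) ^ (i+1) :=
          pow_le_pow_left₀ (hPnn i (by omega)) hGi (i+1)
        have h2 : (P 1 ^ i) ^ (i+1) = (P 1 ^ (i+1)) ^ i := by
          rw [← pow_mul, ← pow_mul]; ring_nf
        have hfin : P (i+1) ^ i ≤ (P 1 ^ (i+1)) ^ i := by
          calc P (i+1) ^ i ≤ P i ^ (i+1) := hDi1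
            _ ≤ (P 1 ^ i) ^ (i+1) := h1
            _ = (P 1 ^ (i+1)) ^ i := h2
        exact (pow_le_pow_iff_left₀ (hPnn (i+1) hjk)
          (pow_nonneg (hPnn 1 (by omega)) (i+1)) (by omega)).mp hfin
  have hGk : P k ≤ P 1 ^ k := G k hk1 le_rfl
  have hPk : 0 < P k := hPpos k hk1 le_rfl
  have hP1 : 0 < P 1 := hPpos 1 le_rfl hk1
  have hkR : (k:ℝ) ≠ 0 := by positivity
  have h1 : (P k) ^ ((1:ℝ)/(k:ℝ)) ≤ (P 1 ^ k) ^ ((1:ℝ)/(k:ℝ)) :=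
    Real.rpow_le_rpow (le_of_lt hPk) hGk (by positivity)
  have h2 : ((P 1 ^ k : ℝ)) ^ ((1:ℝ)/(k:ℝ)) = P 1 := by
    rw [← Real.rpow_natCast (P 1) k, ← Real.rpow_mul (le_of_lt hP1),
      mul_one_div, div_self hkR, Real.rpow_one]
  have hgoal : (P k) ^ ((1:ℝ)/(k:ℝ)) ≤ P 1 := by rw [← h2]; exact h1
  have hP1eq : P 1 = esymm n 1 lam / (n : ℝ) := by
    rw [hPdef]; simp [Nat.choose_one_right]
  rw [← hP1eq]
  exact hgoal
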